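/- Let X and Y be forests over an alphabet 𝒳 and let c be a cost function over 𝒳 that is non-negative, self-equal, and conforms to the triangular inequality; let x̄_k be an ancestor of (or equal to) x̄_i in X and ȳ_l an ancestor of (or equal to) ȳ_j in Y. Then the base cases of the subforest edit distance hold: D_c(ε, ε) = 0; D_c(X[i, rl_X(k)], ε) = c(x_i, −) + D_c(X[i+1, rl_X(k)], ε); and D_c(ε, Y[j, rl_Y(l)]) = c(−, y_j) + D_c(ε, Y[j+1, rl_Y(l)]). -/
import Mathlib


namespace TED

/-- A tree over an alphabet `α`: a label together with a (possibly empty) list of children. -/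
inductive PTree (α : Type) where
  | node : α → List (PTree α) → PTree α

/-- A forest over `α` is a finite list of trees; `[]` is the empty forest `ε`. -/
abbrev Forest (α : Type) := List (PTree α)

namespace PTree

/-- The label of (the root of) a tree. -/
def label {α : Type} : PTree α → α
  | node a _ => a

/-- The children of (the root of) a tree. -/
def children {α : Type} : PTree α → List (PTree α)
  | node _ cs => cs

mutual
  /-- The number of nodes of a tree. -/
  def size {α : Type} : PTree α → ℕ
    | node _ cs => 1 + sizeL cs
  /-- The number of nodes of a forest. -/
  def sizeL {α : Type} : List (PTree α) → ℕ
    | [] => 0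
    | t :: ts => size t + sizeL ts
end

mutual
  /-- The pre-order list of all subtrees of a tree. -/
  def subtreesT {α : Type} : PTree α → List (PTree α)
    | node a cs => node a cs :: subtreesL cs
  /-- The pre-order list of all subtrees of a forest. -/
  def subtreesL {α : Type} : List (PTree α) → List (PTree α)
    | [] => []
    | t :: ts => subtreesT t ++ subtreesL ts
end

end PTree

open PTree

/-- The pre-order `π(X)` of a forest: the list of all its subtrees. -/
def preorder {α : Type} (F : Forest α) : List (PTree α) := PTree.subtreesL F

/-- The size `|X|` of a forest: the length of its pre-order. -/
def fsize {α : Type} (F : Forest α) : ℕ := (preorder F).length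

/-- The `i`-th subtree `x̄_i` (1-indexed pre-order) of a forest, if it exists. -/
def treeAt {α : Type} (F : Forest α) (i : ℕ) : Option (PTree α) := (preorder F)[i - 1]?

/-- The label `x_i` of the `i`-th subtree, as an element of `𝒳 ∪ {−}`
(`none` plays the role of the gap symbol `−`). -/
def labelAt {α : Type} (F : Forest α) (i : ℕ) : Option α := (treeAt F i).map PTree.label

/-- The number of nodes of the `i`-th subtree `x̄_i`. -/
def sizeAt {α : Type} (F : Forest α) (i : ℕ) : ℕ := ((treeAt F i).map PTree.size).getD 0

/-- A cost function over `α`: a real-valued function on `(𝒳 ∪ {−}) × (𝒳 ∪ {−})`,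
where the gap symbol `−` is modelled by `none`. -/
abbrev Cost (α : Type) := Option α → Option α → ℝ

/-- `c` is non-negative. -/
def Nonneg {α : Type} (c : Cost α) : Prop := ∀ x y, 0 ≤ c x y
/-- `c` is self-equal. -/
def SelfEq {α : Type} (c : Cost α) : Prop := ∀ x, c x x = 0
/-- `c` is discernible. -/
def Discernible {α : Type} (c : Cost α) : Prop := ∀ x y, x ≠ y → 0 < c x y
/-- `c` is symmetric. -/
def Symm {α : Type} (c : Cost α) : Prop := ∀ x y, c x y = c y x
/-- `c` conforms to the triangular inequality. -/
def Triangle {α : Type} (c : Cost α) : Prop := ∀ x y z, c x z ≤ c x y + c y z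

/-- Deletion of the first root: its children are spliced into its place. -/
def delRoot {α : Type} : Forest α → Forest α
  | [] => []
  | PTree.node _ cs :: ts => cs ++ ts

/-- Replacement of the label of the first root by `y`. -/
def repRoot {α : Type} (y : α) : Forest α → Forest α
  | [] => []
  | PTree.node _ cs :: ts => PTree.node y cs :: ts

/-- Insertion of a new root labeled `y` at root level, adopting the trees
`l` to `r-1` of the forest as its children. -/
def insRoot {α : Type} (y : α) (l r : ℕ) (F : Forest α) : Forest α :=
  if r > F.length + 1 ∨ l > r ∨ l < 1 then F
  else if l = r then F.take (l - 1) ++ [PTree.node y []] ++ F.drop (l - 1)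
  else F.take (l - 1) ++ [PTree.node y ((F.drop (l - 1)).take (r - l))] ++ F.drop (r - 1)

/-- `del_i`: deletion of the node with pre-order index `i`. -/
def applyDel {α : Type} : ℕ → Forest α → Forest α
  | _, [] => []
  | i, PTree.node a cs :: ts =>
    if i < 1 then PTree.node a cs :: ts
    else if i = 1 then delRoot (PTree.node a cs :: ts)
    else if i ≤ size (PTree.node a cs) then PTree.node a (applyDel (i - 1) cs) :: ts
    else PTree.node a cs :: applyDel (i - size (PTree.node a cs)) ts
  termination_by _ F => sizeOf F

/-- `rep_{i,y}`: replacement of the label of the node with pre-order index `i` by `y`. -/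
def applyRep {α : Type} (y : α) : ℕ → Forest α → Forest α
  | _, [] => []
  | i, PTree.node a cs :: ts =>
    if i < 1 then PTree.node a cs :: ts
    else if i = 1 then repRoot y (PTree.node a cs :: ts)
    else if i ≤ size (PTree.node a cs) then PTree.node a (applyRep y (i - 1) cs) :: ts
    else PTree.node a cs :: applyRep y (i - size (PTree.node a cs)) ts
  termination_by _ F => sizeOf F

/-- `ins_{i,y,l,r}`: insertion of a node labeled `y` as a child of the node with
pre-order index `i` (at root level if `i = 0`), adopting that node's children
`l` through `r-1` as its children. -/
def applyIns {α : Type} (y : α) (l r : ℕ) : ℕ → Forest α → Forest α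
  | 0, F => insRoot y l r F
  | _ + 1, [] => []
  | i + 1, PTree.node a cs :: ts =>
    if i + 1 ≤ size (PTree.node a cs) then PTree.node a (applyIns y l r i cs) :: ts
    else PTree.node a cs :: applyIns y l r (i + 1 - size (PTree.node a cs)) ts
  termination_by _ F => sizeOf F

/-- The standard edits: deletions `del_i`, replacements `rep_{i,y}` and
insertions `ins_{i,y,l,r}`. -/
inductive Edit (α : Type) where
  | del (i : ℕ)
  | rep (i : ℕ) (y : α)
  | ins (i : ℕ) (y : α) (l r : ℕ)

/-- Application of a single edit to a forest. -/
def Edit.apply {α : Type} : Edit α → Forest α → Forest α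
  | .del i, F => applyDel i F
  | .rep i y, F => applyRep y i F
  | .ins i y l r, F => applyIns y l r i F

/-- Application of an edit script `δ̄ = δ₁,…,δ_T` to a forest (left to right). -/
def applyScript {α : Type} (δ : List (Edit α)) (F : Forest α) : Forest α :=
  δ.foldl (fun F e => e.apply F) F

open Classical in
/-- The cost of a single edit with respect to the forest it is applied to:
`0` if the edit leaves the forest unchanged, and otherwise `c(x_i, y)` for a
replacement, `c(x_i, −)` for a deletion and `c(−, y)` for an insertion. -/
noncomputable def editCost {α : Type} (c : Cost α) (e : Edit α) (F : Forest α) : ℝ :=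
  if e.apply F = F then 0
  else
    match e with
    | .del i => c (labelAt F i) none
    | .rep i y => c (labelAt F i) (some y)
    | .ins _ y _ _ => c none (some y)

/-- The cost `c(δ̄, X)` of an edit script: the sum of the costs of its edits,
each evaluated on the forest to which it is applied. -/
noncomputable def scriptCost {α : Type} (c : Cost α) : List (Edit α) → Forest α → ℝ
  | [], _ => 0
  | e :: es, F => editCost c e F + scriptCost c es (e.apply F)

/-- The (subforest) edit distance `D_c(F, G)`: the infimum of the costs of edit
scripts transforming `F` into `G`. -/
noncomputable def fdist {α : Type} (c : Cost α) (F G : Forest α) : ℝ :=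
  sInf { r : ℝ | ∃ δ : List (Edit α), applyScript δ F = G ∧ scriptCost c δ F = r }

/-- The generalized tree edit distance `d_c(x̄, ȳ)` between two trees. -/
noncomputable def ted {α : Type} (c : Cost α) (x y : PTree α) : ℝ := fdist c [x] [y]

/-- `x̄_k` is a (proper) ancestor of `x̄_i`, expressed via 1-indexed pre-order indices:
the descendants of `x̄_k` occupy exactly the pre-order indices `k+1, …, k + |x̄_k| - 1`. -/
def AncestorIdx {α : Type} (F : Forest α) (k i : ℕ) : Prop :=
  k < i ∧ i < k + sizeAt F k

/-- A tree mapping between two forests: a set `M ⊆ {1,…,|F|} × {1,…,|G|}` such that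
for all `(i,j), (i',j') ∈ M` we have `i = i' ↔ j = j'`, `i ≤ i' ↔ j ≤ j'`, and
`x̄_i` is an ancestor of `x̄_{i'}` iff `ȳ_j` is an ancestor of `ȳ_{j'}`. -/
def IsTreeMapping {α : Type} (F G : Forest α) (M : Finset (ℕ × ℕ)) : Prop :=
  (∀ p ∈ M, 1 ≤ p.1 ∧ p.1 ≤ fsize F ∧ 1 ≤ p.2 ∧ p.2 ≤ fsize G) ∧
  (∀ p ∈ M, ∀ q ∈ M,
    (p.1 = q.1 ↔ p.2 = q.2) ∧
    (p.1 ≤ q.1 ↔ p.2 ≤ q.2) ∧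
    (AncestorIdx F p.1 q.1 ↔ AncestorIdx G p.2 q.2))

/-- The cost `c(M, X, Y)` of a tree mapping: the sum of the replacement costs of
the mapped pairs, the deletion costs of the unmapped nodes of `X`, and the
insertion costs of the unmapped nodes of `Y`. -/
noncomputable def mapCost {α : Type} (c : Cost α) (F G : Forest α) (M : Finset (ℕ × ℕ)) : ℝ :=
  (∑ p ∈ M, c (labelAt F p.1) (labelAt G p.2))
  + (∑ i ∈ (Finset.Icc 1 (fsize F)).filter (fun i => ∀ p ∈ M, p.1 ≠ i), c (labelAt F i) none)
  + (∑ j ∈ (Finset.Icc 1 (fsize G)).filter (fun j => ∀ p ∈ M, p.2 ≠ j), c none (labelAt G j))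

/-- A co-optimal tree mapping: a tree mapping of minimum cost. -/
def IsCoOptimal {α : Type} (c : Cost α) (F G : Forest α) (M : Finset (ℕ × ℕ)) : Prop :=
  IsTreeMapping F G M ∧
  ∀ M' : Finset (ℕ × ℕ), IsTreeMapping F G M' → mapCost c F G M ≤ mapCost c F G M'

mutual
  /-- The 1-indexed pre-order position of the rightmost leaf within a tree. -/
  def rlIdx {α : Type} : PTree α → ℕ
    | .node _ cs => rlGo 1 cs
  /-- Helper: the pre-order position of the rightmost leaf of the last tree of a
  forest, where `acc` pre-order positions precede the forest. -/
  def rlGo {α : Type} : ℕ → List (PTree α) → ℕ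
    | acc, [] => acc
    | acc, [t] => acc + rlIdx t
    | acc, t :: ts => rlGo (acc + size t) ts
end

/-- The outermost right leaf `rl_X(i)`: the pre-order index of the rightmost leaf
of the subtree `x̄_i`. -/
def rlAt {α : Type} (F : Forest α) (i : ℕ) : ℕ :=
  match treeAt F i with
  | some t => i + rlIdx t - 1
  | none => i

/-- Helper for the subforest extraction: keeps the nodes with pre-order indices
between `i` and `j` (preserving ancestral structure); `k` is the pre-order index
of the last node already visited. -/
def subAux {α : Type} : Forest α → ℕ → ℕ → ℕ → Forest α × ℕ
  | [], _, _, k => ([], k)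
  | PTree.node a cs :: ts, i, j, k =>
    if k + 1 > j then ([], k + 1)
    else if k + 1 ≥ i then
      let P := subAux cs i j (k + 1)
      let Q := subAux ts i j P.2
      (PTree.node a P.1 :: Q.1, Q.2)
    else
      let P := subAux cs i j (k + 1)
      let Q := subAux ts i j P.2
      (P.1 ++ Q.1, Q.2)
  termination_by F _ _ _ => sizeOf F

/-- The subforest `X[i, j]`: the restriction of `X` to the nodes with pre-order
indices `i, …, j`, preserving the ancestral structure among them. -/
def subforest {α : Type} (F : Forest α) (i j : ℕ) : Forest α := (subAux F i j 0).1

/-! ### Auxiliary lemmas -/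

variable {α : Type}

theorem size_pos (t : PTree α) : 1 ≤ size t := by
  cases t with
  | node a cs => rw [size]; omega

mutual
  theorem length_subtreesT (t : PTree α) : (subtreesT t).length = size t := by
    cases t with
    | node a cs => rw [subtreesT, size, List.length_cons, length_subtreesL]; omega
  theorem length_subtreesL (F : Forest α) : (subtreesL F).length = sizeL F := by
    cases F with
    | nil => rfl
    | cons t ts =>
        rw [subtreesL, sizeL, List.length_append, length_subtreesT, length_subtreesL]
end

theorem subtreesL_cons (a : α) (cs ts : List (PTree α)) :
    subtreesL (PTree.node a cs :: ts) = PTree.node a cs :: (subtreesL cs ++ subtreesL ts) := by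
  rw [subtreesL, subtreesT]; rfl

theorem sizeL_append (A B : Forest α) : sizeL (A ++ B) = sizeL A + sizeL B := by
  induction A with
  | nil => simp [sizeL]
  | cons t ts ih => rw [List.cons_append, sizeL, sizeL, ih]; ring

theorem labelAt_cons_one (a : α) (cs ts : List (PTree α)) :
    labelAt (PTree.node a cs :: ts) 1 = some a := by
  rw [labelAt, treeAt, preorder, subtreesL_cons]
  simp [PTree.label]

theorem labelAt_cons_left (a : α) (cs ts : List (PTree α)) (i : ℕ)
    (h2 : 2 ≤ i) (hle : i ≤ size (PTree.node a cs)) :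
    labelAt (PTree.node a cs :: ts) i = labelAt cs (i - 1) := by
  rw [labelAt, labelAt, treeAt, treeAt, preorder, preorder, subtreesL_cons]
  rw [size] at hle
  have h1 : i - 1 = (i - 2) + 1 := by omega
  rw [h1, List.getElem?_cons_succ,
    List.getElem?_append_left (by rw [length_subtreesL]; omega)]
  have h3 : i - 2 + 1 - 1 = i - 2 := by omega
  rw [h3]

theorem labelAt_cons_right (a : α) (cs ts : List (PTree α)) (i : ℕ)
    (hgt : size (PTree.node a cs) < i) :
    labelAt (PTree.node a cs :: ts) i = labelAt ts (i - size (PTree.node a cs)) := by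
  rw [labelAt, labelAt, treeAt, treeAt, preorder, preorder, subtreesL_cons]
  rw [size] at hgt ⊢
  have h1 : i - 1 = (i - 2) + 1 := by omega
  rw [h1, List.getElem?_cons_succ,
    List.getElem?_append_right (by rw [length_subtreesL]; omega)]
  rw [length_subtreesL]
  have h3 : i - (1 + sizeL cs) - 1 = i - 2 - sizeL cs := by omega
  rw [h3]

mutual
  def nsT (f : α → ℝ) : PTree α → ℝ
    | .node a cs => f a + nsL f cs
  def nsL (f : α → ℝ) : List (PTree α) → ℝ
    | [] => 0
    | t :: ts => nsT f t + nsL f ts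
end

theorem nsL_append (f : α → ℝ) (A B : Forest α) : nsL f (A ++ B) = nsL f A + nsL f B := by
  induction A with
  | nil => simp [nsL]
  | cons t ts ih => rw [List.cons_append, nsL, nsL, ih]; ring

theorem nsDel_applyDel (f : α → ℝ) (i : ℕ) (F : Forest α) :
    applyDel i F = F ∨
      ∃ a, labelAt F i = some a ∧ nsL f (applyDel i F) + f a = nsL f F := by
  match F with
  | [] => left; rw [applyDel]
  | PTree.node a cs :: ts =>
    rw [applyDel]
    by_cases h1 : i < 1
    · left; simp [h1]
    by_cases h2 : i = 1
    · right
      subst h2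
      refine ⟨a, labelAt_cons_one a cs ts, ?_⟩
      rw [if_neg h1, if_pos rfl, delRoot, nsL_append, nsL, nsT]
      ring
    by_cases h3 : i ≤ size (PTree.node a cs)
    · simp only [h1, h2, h3, if_false, if_true]
      rcases nsDel_applyDel f (i - 1) cs with hc | ⟨a', hl, hns⟩
      · left; rw [hc]
      · right
        refine ⟨a', ?_, ?_⟩
        · rw [labelAt_cons_left a cs ts i (by omega) h3]; exact hl
        · rw [nsL, nsL, nsT, nsT]; linarith
    · simp only [h1, h2, h3, if_false]
      rcases nsDel_applyDel f (i - size (PTree.node a cs)) ts with hc | ⟨a', hl, hns⟩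
      · left; rw [hc]
      · right
        refine ⟨a', ?_, ?_⟩
        · rw [labelAt_cons_right a cs ts i (by omega)]; exact hl
        · rw [nsL, nsL]; linarith
  termination_by sizeOf F

theorem nsDel_applyRep (f : α → ℝ) (y : α) (i : ℕ) (F : Forest α) :
    applyRep y i F = F ∨
      ∃ a, labelAt F i = some a ∧ nsL f (applyRep y i F) + f a = nsL f F + f y := by
  match F with
  | [] => left; rw [applyRep]
  | PTree.node a cs :: ts =>
    rw [applyRep]
    by_cases h1 : i < 1
    · left; simp [h1]
    by_cases h2 : i = 1
    · right
      subst h2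
      refine ⟨a, labelAt_cons_one a cs ts, ?_⟩
      rw [if_neg h1, if_pos rfl, repRoot, nsL, nsL, nsT, nsT]
      ring
    by_cases h3 : i ≤ size (PTree.node a cs)
    · simp only [h1, h2, h3, if_false, if_true]
      rcases nsDel_applyRep f y (i - 1) cs with hc | ⟨a', hl, hns⟩
      · left; rw [hc]
      · right
        refine ⟨a', ?_, ?_⟩
        · rw [labelAt_cons_left a cs ts i (by omega) h3]; exact hl
        · rw [nsL, nsL, nsT, nsT]; linarith
    · simp only [h1, h2, h3, if_false]
      rcases nsDel_applyRep f y (i - size (PTree.node a cs)) ts with hc | ⟨a', hl, hns⟩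
      · left; rw [hc]
      · right
        refine ⟨a', ?_, ?_⟩
        · rw [labelAt_cons_right a cs ts i (by omega)]; exact hl
        · rw [nsL, nsL]; linarith
  termination_by sizeOf F

theorem nsDel_insRoot (f : α → ℝ) (y : α) (l r : ℕ) (F : Forest α) :
    insRoot y l r F = F ∨ nsL f (insRoot y l r F) = nsL f F + f y := by
  rw [insRoot]
  by_cases h1 : r > F.length + 1 ∨ l > r ∨ l < 1
  · left; rw [if_pos h1]
  rw [if_neg h1]
  push_neg at h1
  obtain ⟨hr, hlr, hl⟩ := h1
  by_cases h2 : l = r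
  · right
    rw [if_pos h2, List.append_assoc, List.singleton_append, nsL_append, nsL, nsT, nsL]
    have hfull : nsL f (List.take (l - 1) F) + nsL f (List.drop (l - 1) F) = nsL f F := by
      rw [← nsL_append, List.take_append_drop]
    linarith
  · right
    rw [if_neg h2, List.append_assoc, List.singleton_append, nsL_append, nsL, nsT]
    have key : List.take (r - l) (List.drop (l - 1) F) ++ List.drop (r - 1) F
        = List.drop (l - 1) F := by
      have := List.take_append_drop (r - l) (List.drop (l - 1) F)
      rw [List.drop_drop] at this
      have he : l - 1 + (r - l) = r - 1 := by omega
      rw [he] at this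
      exact this
    have hsum : nsL f (List.take (r - l) (List.drop (l - 1) F)) + nsL f (List.drop (r - 1) F)
        = nsL f (List.drop (l - 1) F) := by
      rw [← nsL_append, key]
    have hfull : nsL f (List.take (l - 1) F) + nsL f (List.drop (l - 1) F) = nsL f F := by
      rw [← nsL_append, List.take_append_drop]
    linarith

theorem nsDel_applyIns (f : α → ℝ) (y : α) (l r i : ℕ) (F : Forest α) :
    applyIns y l r i F = F ∨ nsL f (applyIns y l r i F) = nsL f F + f y := by
  match i, F with
  | 0, F => rw [applyIns]; exact nsDel_insRoot f y l r F
  | i + 1, [] => left; rw [applyIns]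
  | i + 1, PTree.node a cs :: ts =>
    rw [applyIns]
    by_cases h1 : i + 1 ≤ size (PTree.node a cs)
    · simp only [h1, if_true]
      rcases nsDel_applyIns f y l r i cs with hc | hns
      · left; rw [hc]
      · right; rw [nsL, nsL, nsT, nsT, hns]; ring
    · simp only [h1, if_false]
      rcases nsDel_applyIns f y l r (i + 1 - size (PTree.node a cs)) ts with hc | hns
      · left; rw [hc]
      · right; rw [nsL, nsL, hns]; ring
  termination_by sizeOf F

/-- Potential drop for deletion-side. -/
theorem nsDel_edit_step (c : Cost α) (hnn : Nonneg c) (htr : Triangle c)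
    (e : Edit α) (H : Forest α) :
    nsL (fun a => c (some a) none) H
      ≤ editCost c e H + nsL (fun a => c (some a) none) (e.apply H) := by
  set f : α → ℝ := fun a => c (some a) none with hf
  by_cases heq : e.apply H = H
  · rw [editCost.eq_def, if_pos heq, heq]; linarith
  match e with
  | .del i =>
    have hcost : editCost c (Edit.del i) H = c (labelAt H i) none := by
      rw [editCost.eq_def, if_neg heq]
    rcases nsDel_applyDel f i H with hc | ⟨a, hl, hns⟩
    · exact absurd hc heq
    · rw [hcost, hl]
      simp only [Edit.apply] at hns ⊢
      have : f a = c (some a) none := rfl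
      linarith
  | .rep i y =>
    have hcost : editCost c (Edit.rep i y) H = c (labelAt H i) (some y) := by
      rw [editCost.eq_def, if_neg heq]
    rcases nsDel_applyRep f y i H with hc | ⟨a, hl, hns⟩
    · exact absurd hc heq
    · rw [hcost, hl]
      simp only [Edit.apply] at hns ⊢
      have h3 : c (some a) none ≤ c (some a) (some y) + c (some y) none :=
        htr (some a) (some y) none
      have e1 : f a = c (some a) none := rfl
      have e2 : f y = c (some y) none := rfl
      linarith
  | .ins i y l r =>
    have hcost : editCost c (Edit.ins i y l r) H = c none (some y) := by
      rw [editCost.eq_def, if_neg heq]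
    rcases nsDel_applyIns f y l r i H with hc | hns
    · exact absurd hc heq
    · rw [hcost]
      simp only [Edit.apply] at hns ⊢
      have h1 : 0 ≤ c none (some y) := hnn _ _
      have h2 : 0 ≤ f y := hnn _ _
      linarith

/-- Potential growth for insertion-side. -/
theorem nsIns_edit_step (c : Cost α) (hnn : Nonneg c) (htr : Triangle c)
    (e : Edit α) (H : Forest α) :
    nsL (fun a => c none (some a)) (e.apply H)
      ≤ editCost c e H + nsL (fun a => c none (some a)) H := by
  set g : α → ℝ := fun a => c none (some a) with hg
  by_cases heq : e.apply H = H
  · rw [editCost.eq_def, if_pos heq, heq]; linarith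
  match e with
  | .del i =>
    have hcost : editCost c (Edit.del i) H = c (labelAt H i) none := by
      rw [editCost.eq_def, if_neg heq]
    rcases nsDel_applyDel g i H with hc | ⟨a, hl, hns⟩
    · exact absurd hc heq
    · rw [hcost]
      simp only [Edit.apply] at hns ⊢
      have h1 : 0 ≤ c (labelAt H i) none := hnn _ _
      have h2 : 0 ≤ g a := hnn _ _
      linarith
  | .rep i y =>
    have hcost : editCost c (Edit.rep i y) H = c (labelAt H i) (some y) := by
      rw [editCost.eq_def, if_neg heq]
    rcases nsDel_applyRep g y i H with hc | ⟨a, hl, hns⟩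
    · exact absurd hc heq
    · rw [hcost, hl]
      simp only [Edit.apply] at hns ⊢
      have h3 : c none (some y) ≤ c none (some a) + c (some a) (some y) :=
        htr none (some a) (some y)
      have e1 : g a = c none (some a) := rfl
      have e2 : g y = c none (some y) := rfl
      linarith
  | .ins i y l r =>
    have hcost : editCost c (Edit.ins i y l r) H = c none (some y) := by
      rw [editCost.eq_def, if_neg heq]
    rcases nsDel_applyIns g y l r i H with hc | hns
    · exact absurd hc heq
    · rw [hcost]
      simp only [Edit.apply] at hns ⊢
      rw [hns]
      linarith

theorem applyScript_cons (e : Edit α) (δ : List (Edit α)) (H : Forest α) :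
    applyScript (e :: δ) H = applyScript δ (e.apply H) := rfl

theorem nsDel_le_scriptCost (c : Cost α) (hnn : Nonneg c) (htr : Triangle c)
    (δ : List (Edit α)) (H : Forest α) :
    nsL (fun a => c (some a) none) H
      ≤ scriptCost c δ H + nsL (fun a => c (some a) none) (applyScript δ H) := by
  induction δ generalizing H with
  | nil => rw [scriptCost]; simp [applyScript]
  | cons e es ih =>
    have h1 := nsDel_edit_step c hnn htr e H
    have h2 := ih (e.apply H)
    rw [scriptCost, applyScript_cons]
    linarith

theorem nsIns_le_scriptCost (c : Cost α) (hnn : Nonneg c) (htr : Triangle c)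
    (δ : List (Edit α)) (H : Forest α) :
    nsL (fun a => c none (some a)) (applyScript δ H)
      ≤ scriptCost c δ H + nsL (fun a => c none (some a)) H := by
  induction δ generalizing H with
  | nil => rw [scriptCost]; simp [applyScript]
  | cons e es ih =>
    have h1 := nsIns_edit_step c hnn htr e H
    have h2 := ih (e.apply H)
    rw [scriptCost, applyScript_cons]
    linarith

/-- A script that deletes every node of `F`. -/
def deleteAll : Forest α → List (Edit α)
  | [] => []
  | PTree.node _ cs :: ts => Edit.del 1 :: deleteAll (cs ++ ts)
  termination_by F => sizeL F
  decreasing_by simp [sizeL_append, sizeL, size]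

theorem apply_del_one (a : α) (cs ts : List (PTree α)) :
    Edit.apply (Edit.del 1) (PTree.node a cs :: ts) = cs ++ ts := by
  rw [Edit.apply, applyDel, if_neg (by omega), if_pos rfl, delRoot]

theorem apply_deleteAll (F : Forest α) : applyScript (deleteAll F) F = [] := by
  match F with
  | [] => rw [deleteAll.eq_def]; rfl
  | PTree.node a cs :: ts =>
    rw [deleteAll.eq_def, applyScript_cons, apply_del_one]
    exact apply_deleteAll (cs ++ ts)
  termination_by sizeL F
  decreasing_by simp [sizeL_append, sizeL, size]

theorem cost_deleteAll (c : Cost α) (F : Forest α) :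
    scriptCost c (deleteAll F) F = nsL (fun a => c (some a) none) F := by
  match F with
  | [] => rw [deleteAll.eq_def]; rfl
  | PTree.node a cs :: ts =>
    rw [deleteAll.eq_def, scriptCost, apply_del_one, cost_deleteAll c (cs ++ ts)]
    have hne : Edit.apply (Edit.del 1) (PTree.node a cs :: ts) ≠ PTree.node a cs :: ts := by
      rw [apply_del_one]
      intro h
      have := congrArg sizeL h
      rw [sizeL_append, sizeL, size] at this
      omega
    have hcost : editCost c (Edit.del 1) (PTree.node a cs :: ts)
        = c (labelAt (PTree.node a cs :: ts) 1) none := by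
      rw [editCost.eq_def, if_neg hne]
    rw [hcost, labelAt_cons_one, nsL_append, nsL, nsT]
    ring
  termination_by sizeL F
  decreasing_by simp [sizeL_append, sizeL, size]

theorem fdist_to_nil (c : Cost α) (hnn : Nonneg c) (htr : Triangle c) (H : Forest α) :
    fdist c H [] = nsL (fun a => c (some a) none) H := by
  rw [fdist]
  have hmem : nsL (fun a => c (some a) none) H ∈
      {r : ℝ | ∃ δ : List (Edit α), applyScript δ H = [] ∧ scriptCost c δ H = r} :=
    ⟨deleteAll H, apply_deleteAll H, cost_deleteAll c H⟩
  have hlb : ∀ r ∈ {r : ℝ | ∃ δ : List (Edit α), applyScript δ H = [] ∧ scriptCost c δ H = r},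
      nsL (fun a => c (some a) none) H ≤ r := by
    rintro r ⟨δ, hap, rfl⟩
    have := nsDel_le_scriptCost c hnn htr δ H
    rw [hap] at this
    simpa [nsL] using this
  exact le_antisymm (csInf_le ⟨_, hlb⟩ hmem) (le_csInf ⟨_, hmem⟩ hlb)

theorem applyScript_append (δ₁ δ₂ : List (Edit α)) (H : Forest α) :
    applyScript (δ₁ ++ δ₂) H = applyScript δ₂ (applyScript δ₁ H) := by
  rw [applyScript, applyScript, applyScript, List.foldl_append]

theorem scriptCost_append (c : Cost α) (δ₁ δ₂ : List (Edit α)) (H : Forest α) :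
    scriptCost c (δ₁ ++ δ₂) H = scriptCost c δ₁ H + scriptCost c δ₂ (applyScript δ₁ H) := by
  induction δ₁ generalizing H with
  | nil => rw [scriptCost]; simp [applyScript]
  | cons e es ih =>
    rw [List.cons_append, scriptCost, scriptCost, ih, applyScript_cons]
    ring

mutual
  def buildT : PTree α → List (Edit α)
    | .node a cs => buildL cs ++ [Edit.ins 0 a 1 (cs.length + 1)]
  def buildL : List (PTree α) → List (Edit α)
    | [] => []
    | t :: ts => buildL ts ++ buildT t
end

theorem apply_ins_front (a : α) (cs F : List (PTree α)) :
    Edit.apply (Edit.ins 0 a 1 (cs.length + 1)) (cs ++ F) = PTree.node a cs :: F := by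
  rw [Edit.apply, applyIns, insRoot]
  rw [if_neg (by simp)]
  by_cases h : cs = []
  · subst h
    rw [if_pos (by simp)]
    simp
  · rw [if_neg (by simp [List.length_eq_zero_iff]; exact h)]
    simp only [Nat.add_sub_cancel, Nat.sub_self, List.take_zero, List.drop_zero]
    rw [List.take_left, List.drop_left]
    simp

theorem cost_ins_front (c : Cost α) (a : α) (cs F : List (PTree α)) :
    editCost c (Edit.ins 0 a 1 (cs.length + 1)) (cs ++ F) = c none (some a) := by
  have hne : Edit.apply (Edit.ins 0 a 1 (cs.length + 1)) (cs ++ F) ≠ cs ++ F := by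
    rw [apply_ins_front]
    intro h
    have := congrArg sizeL h
    rw [sizeL, sizeL_append, size] at this
    omega
  rw [editCost.eq_def, if_neg hne]

mutual
  theorem apply_buildT (t : PTree α) (F : Forest α) :
      applyScript (buildT t) F = t :: F := by
    cases t with
    | node a cs =>
      rw [buildT, applyScript_append, apply_buildL]
      show Edit.apply (Edit.ins 0 a 1 (cs.length + 1)) (cs ++ F) = _
      rw [apply_ins_front]
  theorem apply_buildL (G F : Forest α) : applyScript (buildL G) F = G ++ F := by
    cases G with
    | nil => rfl
    | cons t ts =>
      rw [buildL, applyScript_append, apply_buildL, apply_buildT]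
      rfl
end

mutual
  theorem cost_buildT (c : Cost α) (t : PTree α) (F : Forest α) :
      scriptCost c (buildT t) F = nsT (fun a => c none (some a)) t := by
    cases t with
    | node a cs =>
      rw [buildT, scriptCost_append, cost_buildL, apply_buildL, nsT]
      have : scriptCost c [Edit.ins 0 a 1 (cs.length + 1)] (cs ++ F)
          = c none (some a) := by
        rw [scriptCost, scriptCost, cost_ins_front]
        ring
      rw [this]
      ring
  theorem cost_buildL (c : Cost α) (G : Forest α) (F : Forest α) :
      scriptCost c (buildL G) F = nsL (fun a => c none (some a)) G := by
    cases G with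
    | nil => rfl
    | cons t ts =>
      rw [buildL, scriptCost_append, cost_buildL, apply_buildL, cost_buildT, nsL]
      ring
end

theorem fdist_from_nil (c : Cost α) (hnn : Nonneg c) (htr : Triangle c) (G : Forest α) :
    fdist c [] G = nsL (fun a => c none (some a)) G := by
  rw [fdist]
  have hmem : nsL (fun a => c none (some a)) G ∈
      {r : ℝ | ∃ δ : List (Edit α), applyScript δ ([] : Forest α) = G
        ∧ scriptCost c δ [] = r} :=
    ⟨buildL G, by rw [apply_buildL]; simp, cost_buildL c G []⟩
  have hlb : ∀ r ∈ {r : ℝ | ∃ δ : List (Edit α), applyScript δ ([] : Forest α) = G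
      ∧ scriptCost c δ [] = r}, nsL (fun a => c none (some a)) G ≤ r := by
    rintro r ⟨δ, hap, rfl⟩
    have := nsIns_le_scriptCost c hnn htr δ []
    rw [hap] at this
    simpa [nsL] using this
  exact le_antisymm (csInf_le ⟨_, hlb⟩ hmem) (le_csInf ⟨_, hmem⟩ hlb)

theorem subAux_nil (i j k : ℕ) : subAux ([] : Forest α) i j k = ([], k) := by rw [subAux]

theorem subAux_cons_exit (a : α) (cs ts : List (PTree α)) (i j k : ℕ) (h : j < k + 1) :
    subAux (PTree.node a cs :: ts) i j k = ([], k + 1) := by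
  rw [subAux, if_pos (by omega)]

theorem subAux_cons_snd (a : α) (cs ts : List (PTree α)) (i j k : ℕ) (h : k + 1 ≤ j) :
    (subAux (PTree.node a cs :: ts) i j k).2
      = (subAux ts i j (subAux cs i j (k + 1)).2).2 := by
  rw [subAux, if_neg (by omega)]
  by_cases h2 : k + 1 ≥ i
  · rw [if_pos h2]
  · rw [if_neg h2]

theorem subAux_cons_fst_ge (a : α) (cs ts : List (PTree α)) (i j k : ℕ)
    (h : k + 1 ≤ j) (h2 : i ≤ k + 1) :
    (subAux (PTree.node a cs :: ts) i j k).1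
      = PTree.node a (subAux cs i j (k + 1)).1
          :: (subAux ts i j (subAux cs i j (k + 1)).2).1 := by
  rw [subAux, if_neg (by omega), if_pos (by omega)]

theorem subAux_cons_fst_lt (a : α) (cs ts : List (PTree α)) (i j k : ℕ)
    (h : k + 1 ≤ j) (h2 : k + 1 < i) :
    (subAux (PTree.node a cs :: ts) i j k).1
      = (subAux cs i j (k + 1)).1 ++ (subAux ts i j (subAux cs i j (k + 1)).2).1 := by
  rw [subAux, if_neg (by omega), if_neg (by omega)]

theorem subAux_snd_indep : ∀ (F : Forest α) (i i' j k : ℕ),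
    (subAux F i j k).2 = (subAux F i' j k).2
  | [], i, i', j, k => by rw [subAux_nil, subAux_nil]
  | PTree.node a cs :: ts, i, i', j, k => by
    by_cases hj : j < k + 1
    · rw [subAux_cons_exit a cs ts i j k hj, subAux_cons_exit a cs ts i' j k hj]
    · rw [subAux_cons_snd a cs ts i j k (by omega), subAux_cons_snd a cs ts i' j k (by omega),
        subAux_snd_indep cs i i' j (k + 1)]
      exact subAux_snd_indep ts i i' j _
  termination_by F => sizeOf F

theorem subAux_snd_ge : ∀ (F : Forest α) (i j k : ℕ), k ≤ (subAux F i j k).2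
  | [], i, j, k => by rw [subAux_nil]
  | PTree.node a cs :: ts, i, j, k => by
    by_cases hj : j < k + 1
    · rw [subAux_cons_exit a cs ts i j k hj]; omega
    · rw [subAux_cons_snd a cs ts i j k (by omega)]
      have h1 := subAux_snd_ge cs i j (k + 1)
      have h2 := subAux_snd_ge ts i j (subAux cs i j (k + 1)).2
      omega
  termination_by F => sizeOf F

theorem subAux_snd_le : ∀ (F : Forest α) (i j k : ℕ), (subAux F i j k).2 ≤ k + sizeL F
  | [], i, j, k => by rw [subAux_nil, sizeL]; omega
  | PTree.node a cs :: ts, i, j, k => by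
    have hsz : sizeL (PTree.node a cs :: ts) = 1 + sizeL cs + sizeL ts := by
      rw [sizeL, size]
    by_cases hj : j < k + 1
    · rw [subAux_cons_exit a cs ts i j k hj]; omega
    · rw [subAux_cons_snd a cs ts i j k (by omega)]
      have h1 := subAux_snd_le cs i j (k + 1)
      have h2 := subAux_snd_le ts i j (subAux cs i j (k + 1)).2
      omega
  termination_by F => sizeOf F

theorem subAux_snd_eq_or_gt : ∀ (F : Forest α) (i j k : ℕ),
    (subAux F i j k).2 = k + sizeL F ∨ j < (subAux F i j k).2
  | [], i, j, k => by rw [subAux_nil, sizeL]; left; rfl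
  | PTree.node a cs :: ts, i, j, k => by
    have hsz : sizeL (PTree.node a cs :: ts) = 1 + sizeL cs + sizeL ts := by
      rw [sizeL, size]
    by_cases hj : j < k + 1
    · rw [subAux_cons_exit a cs ts i j k hj]; right; omega
    · rw [subAux_cons_snd a cs ts i j k (by omega)]
      rcases subAux_snd_eq_or_gt ts i j (subAux cs i j (k + 1)).2 with h2 | h2
      · rcases subAux_snd_eq_or_gt cs i j (k + 1) with h1 | h1
        · left; omega
        · right
          have := subAux_snd_ge ts i j (subAux cs i j (k + 1)).2
          omega
      · right; exact h2
  termination_by F => sizeOf F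

theorem subAux_fst_exit_all : ∀ (F : Forest α) (i j k : ℕ), j ≤ k → (subAux F i j k).1 = []
  | [], i, j, k, _ => by rw [subAux_nil]
  | PTree.node a cs :: ts, i, j, k, h => by
    rw [subAux_cons_exit a cs ts i j k (by omega)]

theorem subAux_fst_right : ∀ (F : Forest α) (i j k : ℕ),
    k + sizeL F < i → (subAux F i j k).1 = []
  | [], i, j, k, _ => by rw [subAux_nil]
  | PTree.node a cs :: ts, i, j, k, h => by
    have hsz : sizeL (PTree.node a cs :: ts) = 1 + sizeL cs + sizeL ts := by
      rw [sizeL, size]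
    by_cases hj : j < k + 1
    · rw [subAux_cons_exit a cs ts i j k hj]
    · rw [subAux_cons_fst_lt a cs ts i j k (by omega) (by omega)]
      rw [subAux_fst_right cs i j (k + 1) (by omega)]
      rcases subAux_snd_eq_or_gt cs i j (k + 1) with h1 | h1
      · rw [subAux_fst_right ts i j (subAux cs i j (k + 1)).2 (by omega)]
        rfl
      · rw [subAux_fst_exit_all ts i j (subAux cs i j (k + 1)).2 (by omega)]
        rfl
  termination_by F => sizeOf F

theorem subAux_eq_of_le : ∀ (F : Forest α) (i i' j k : ℕ), i ≤ k + 1 → i' ≤ k + 1 →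
    subAux F i j k = subAux F i' j k
  | [], i, i', j, k, _, _ => by rw [subAux_nil, subAux_nil]
  | PTree.node a cs :: ts, i, i', j, k, hi, hi' => by
    by_cases hj : j < k + 1
    · rw [subAux_cons_exit a cs ts i j k hj, subAux_cons_exit a cs ts i' j k hj]
    · have hcs : subAux cs i j (k + 1) = subAux cs i' j (k + 1) :=
        subAux_eq_of_le cs i i' j (k + 1) (by omega) (by omega)
      have hge := subAux_snd_ge cs i j (k + 1)
      have hts : subAux ts i j (subAux cs i j (k + 1)).2
          = subAux ts i' j (subAux cs i j (k + 1)).2 :=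
        subAux_eq_of_le ts i i' j (subAux cs i j (k + 1)).2 (by omega) (by omega)
      apply Prod.ext
      · rw [subAux_cons_fst_ge a cs ts i j k (by omega) (by omega),
          subAux_cons_fst_ge a cs ts i' j k (by omega) (by omega), ← hcs, ← hts]
      · rw [subAux_cons_snd a cs ts i j k (by omega),
          subAux_cons_snd a cs ts i' j k (by omega), ← hcs, ← hts]
  termination_by F => sizeOf F

theorem subAux_split : ∀ (F : Forest α) (i j k : ℕ), k < i → i ≤ j → i ≤ k + sizeL F →
    ∃ (a : α) (cs' ts' : List (PTree α)),
      (subAux F i j k).1 = PTree.node a cs' :: ts' ∧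
      ((subtreesL F)[i - k - 1]?).map label = some a ∧
      cs' ++ ts' = (subAux F (i + 1) j k).1
  | [], i, j, k, hk, hij, hsz => by rw [sizeL] at hsz; omega
  | PTree.node a cs :: ts, i, j, k, hk, hij, hsz => by
    have hsz' : sizeL (PTree.node a cs :: ts) = 1 + sizeL cs + sizeL ts := by
      rw [sizeL, size]
    rw [hsz'] at hsz
    have hj : k + 1 ≤ j := by omega
    by_cases hik : i = k + 1
    · -- the node `i` is the first root
      subst hik
      have hP : subAux cs (k + 1) j (k + 1) = subAux cs (k + 1 + 1) j (k + 1) :=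
        subAux_eq_of_le cs (k + 1) (k + 1 + 1) j (k + 1) (by omega) (by omega)
      have hge := subAux_snd_ge cs (k + 1) j (k + 1)
      have hQ : subAux ts (k + 1) j (subAux cs (k + 1) j (k + 1)).2
          = subAux ts (k + 1 + 1) j (subAux cs (k + 1) j (k + 1)).2 :=
        subAux_eq_of_le ts (k + 1) (k + 1 + 1) j _ (by omega) (by omega)
      refine ⟨a, (subAux cs (k + 1) j (k + 1)).1,
        (subAux ts (k + 1) j (subAux cs (k + 1) j (k + 1)).2).1, ?_, ?_, ?_⟩
      · exact subAux_cons_fst_ge a cs ts (k + 1) j k hj (by omega)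
      · rw [subtreesL_cons]
        simp [PTree.label]
      · rw [subAux_cons_fst_lt a cs ts (k + 1 + 1) j k hj (by omega), ← hP, ← hQ]
    · have hik2 : k + 1 < i := by omega
      by_cases hin : i ≤ k + 1 + sizeL cs
      · -- the node `i` lies in `cs`
        obtain ⟨a', cs', ts', hfst, hlab, happ⟩ :=
          subAux_split cs i j (k + 1) (by omega) hij (by omega)
        have hsnd : (subAux cs i j (k + 1)).2 = (subAux cs (i + 1) j (k + 1)).2 :=
          subAux_snd_indep cs i (i + 1) j (k + 1)
        have hQeq : (subAux ts i j (subAux cs i j (k + 1)).2).1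
            = (subAux ts (i + 1) j (subAux cs (i + 1) j (k + 1)).2).1 := by
          rw [← hsnd]
          rcases subAux_snd_eq_or_gt cs i j (k + 1) with h1 | h1
          · have : subAux ts i j (subAux cs i j (k + 1)).2
                = subAux ts (i + 1) j (subAux cs i j (k + 1)).2 :=
              subAux_eq_of_le ts i (i + 1) j _ (by omega) (by omega)
            rw [this]
          · rw [subAux_fst_exit_all ts i j _ (by omega),
              subAux_fst_exit_all ts (i + 1) j _ (by omega)]
        refine ⟨a', cs', ts' ++ (subAux ts i j (subAux cs i j (k + 1)).2).1, ?_, ?_, ?_⟩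
        · rw [subAux_cons_fst_lt a cs ts i j k hj hik2, hfst]
          rfl
        · rw [subtreesL_cons]
          have h1 : i - k - 1 = (i - k - 2) + 1 := by omega
          rw [h1, List.getElem?_cons_succ,
            List.getElem?_append_left (by rw [length_subtreesL]; omega)]
          have h2 : i - k - 2 = i - (k + 1) - 1 := by omega
          rw [h2]
          exact hlab
        · rw [subAux_cons_fst_lt a cs ts (i + 1) j k hj (by omega), ← happ, ← hQeq,
            List.append_assoc]
      · -- the node `i` lies in `ts`
        have hP1 : (subAux cs i j (k + 1)).1 = [] :=
          subAux_fst_right cs i j (k + 1) (by omega)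
        have hP1' : (subAux cs (i + 1) j (k + 1)).1 = [] :=
          subAux_fst_right cs (i + 1) j (k + 1) (by omega)
        have hle := subAux_snd_le cs i j (k + 1)
        have hP2 : (subAux cs i j (k + 1)).2 = k + 1 + sizeL cs := by
          rcases subAux_snd_eq_or_gt cs i j (k + 1) with h1 | h1
          · exact h1
          · omega
        have hsnd : (subAux cs (i + 1) j (k + 1)).2 = (subAux cs i j (k + 1)).2 :=
          subAux_snd_indep cs (i + 1) i j (k + 1)
        obtain ⟨a', cs', ts', hfst, hlab, happ⟩ :=
          subAux_split ts i j (subAux cs i j (k + 1)).2 (by omega) hij (by omega)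
        refine ⟨a', cs', ts', ?_, ?_, ?_⟩
        · rw [subAux_cons_fst_lt a cs ts i j k hj hik2, hP1, hfst]
          rfl
        · rw [subtreesL_cons]
          have h1 : i - k - 1 = (i - k - 2) + 1 := by omega
          rw [h1, List.getElem?_cons_succ,
            List.getElem?_append_right (by rw [length_subtreesL]; omega)]
          rw [length_subtreesL]
          have h2 : i - k - 2 - sizeL cs = i - (subAux cs i j (k + 1)).2 - 1 := by omega
          rw [h2]
          exact hlab
        · rw [subAux_cons_fst_lt a cs ts (i + 1) j k hj (by omega), hP1', hsnd, ← happ]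
          rfl
  termination_by F => sizeOf F

mutual
  theorem rlIdx_eq_size : ∀ (t : PTree α), rlIdx t = size t
    | .node a cs => by rw [rlIdx, rlGo_eq_size, size]
  theorem rlGo_eq_size : ∀ (acc : ℕ) (ts : List (PTree α)), rlGo acc ts = acc + sizeL ts
    | acc, [] => by rw [rlGo]; rw [sizeL]; omega
    | acc, [t] => by rw [rlGo, rlIdx_eq_size, sizeL, sizeL]; omega
    | acc, t :: t' :: ts => by
        rw [rlGo, rlGo_eq_size (acc + size t) (t' :: ts)]
        · rw [show sizeL (t :: t' :: ts) = size t + sizeL (t' :: ts) from rfl]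
          omega
        · simp
end

theorem fsize_eq_sizeL (F : Forest α) : fsize F = sizeL F := by
  rw [fsize, preorder, length_subtreesL]

/-- The key step: the first node of `X[i, j]` (with `i ≤ j` and node `i` existing)
has the label of `x̄_i`, and deleting it yields `X[i+1, j]`. -/
theorem subforest_split (F : Forest α) (i j : ℕ) (h1 : 1 ≤ i) (h2 : i ≤ j)
    (h3 : i ≤ fsize F) :
    ∃ (a : α) (cs' ts' : List (PTree α)),
      subforest F i j = PTree.node a cs' :: ts' ∧
      labelAt F i = some a ∧
      cs' ++ ts' = subforest F (i + 1) j := by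
  obtain ⟨a, cs', ts', hfst, hlab, happ⟩ :=
    subAux_split F i j 0 (by omega) h2 (by rw [fsize_eq_sizeL] at h3; omega)
  refine ⟨a, cs', ts', hfst, ?_, happ⟩
  rw [labelAt, treeAt, preorder]
  simpa using hlab

theorem rlAt_ge (F : Forest α) (i k : ℕ) (hk1 : 1 ≤ k) (hk2 : k ≤ fsize F)
    (hki : k = i ∨ AncestorIdx F k i) : i ≤ rlAt F k := by
  have hkl : k - 1 < (preorder F).length := by
    rw [fsize] at hk2; omega
  have htk : treeAt F k = some ((preorder F)[k - 1]) := by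
    rw [treeAt]; exact List.getElem?_eq_getElem hkl
  have hrl : rlAt F k = k + size ((preorder F)[k - 1]) - 1 := by
    rw [rlAt, htk]
    show k + rlIdx ((preorder F)[k - 1]) - 1 = _
    rw [rlIdx_eq_size]
  have hszAt : sizeAt F k = size ((preorder F)[k - 1]) := by
    rw [sizeAt, htk]; rfl
  have hsp := size_pos ((preorder F)[k - 1])
  rcases hki with h | h
  · omega
  · obtain ⟨h1, h2⟩ := h
    rw [hszAt] at h2
    omega

/-- The base cases of the subforest edit distance: the distance
between empty forests is `0`; transforming a subforest into the empty forest deletes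
its first node; and transforming the empty forest into a subforest inserts the first
node. -/
theorem fdist_base_cases {α : Type} (c : Cost α) (hnn : Nonneg c) (hse : SelfEq c)
    (htr : Triangle c) (F G : Forest α) (hF : F ≠ []) (hG : G ≠ [])
    (i k : ℕ) (hi1 : 1 ≤ i) (hi2 : i ≤ fsize F) (hk1 : 1 ≤ k) (hk2 : k ≤ fsize F)
    (hki : k = i ∨ AncestorIdx F k i)
    (j l : ℕ) (hj1 : 1 ≤ j) (hj2 : j ≤ fsize G) (hl1 : 1 ≤ l) (hl2 : l ≤ fsize G)
    (hlj : l = j ∨ AncestorIdx G l j) :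
    fdist c ([] : Forest α) ([] : Forest α) = 0 ∧
    fdist c (subforest F i (rlAt F k)) ([] : Forest α) =
      c (labelAt F i) none + fdist c (subforest F (i + 1) (rlAt F k)) ([] : Forest α) ∧
    fdist c ([] : Forest α) (subforest G j (rlAt G l)) =
      c none (labelAt G j) + fdist c ([] : Forest α) (subforest G (j + 1) (rlAt G l)) := by
  refine ⟨?_, ?_, ?_⟩
  · rw [fdist_to_nil c hnn htr []]
    rfl
  · have hir : i ≤ rlAt F k := rlAt_ge F i k hk1 hk2 hki
    obtain ⟨a, cs', ts', hfst, hlab, happ⟩ := subforest_split F i (rlAt F k) hi1 hir hi2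
    rw [fdist_to_nil c hnn htr, fdist_to_nil c hnn htr, hfst, hlab, ← happ,
      nsL, nsT, nsL_append]
    ring
  · have hjr : j ≤ rlAt G l := rlAt_ge G j l hl1 hl2 hlj
    obtain ⟨a, cs', ts', hfst, hlab, happ⟩ := subforest_split G j (rlAt G l) hj1 hjr hj2
    rw [fdist_from_nil c hnn htr, fdist_from_nil c hnn htr, hfst, hlab, ← happ,
      nsL, nsT, nsL_append]
    ring

end TED
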